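/- Let n ≥ 1 be an integer and r > 0. The subgroup of the Heisenberg group H^n generated by the sphere S_r^n = {(z,0) ∈ H^n : ‖z‖ = r} is all of H^n. -/

import Mathlib

open MeasureTheory

/-- The underlying space of the Heisenberg group `H^n = ℂ^n × ℝ`. -/
abbrev Heis (n : ℕ) := EuclideanSpace ℂ (Fin n) × ℝ

/-- The Heisenberg group multiplication
`(z,t)·(w,s) = (z+w, t+s+(1/2)Im⟨z,w⟩)` with `⟨z,w⟩ = ∑ j, z j * conj (w j)`. -/
noncomputable def heisMul {n : ℕ} (p q : Heis n) : Heis n :=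
  (p.1 + q.1, p.2 + q.2 + (1 / 2) * (∑ j, p.1 j * (starRingEnd ℂ) (q.1 j)).im)

/-- The Heisenberg group structure on `ℂ^n × ℝ`. -/
noncomputable instance heisGroup (n : ℕ) : Group (Heis n) where
  mul := heisMul
  one := ((0 : EuclideanSpace ℂ (Fin n)), (0 : ℝ))
  inv p := (-p.1, -p.2)
  mul_assoc p q s := by
    show heisMul (heisMul p q) s = heisMul p (heisMul q s)
    refine Prod.ext (add_assoc _ _ _) ?_
    simp only [heisMul, PiLp.add_apply, map_add, add_mul, mul_add, Finset.sum_add_distrib,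
      Complex.add_im]
    ring
  one_mul p := by
    show heisMul ((0 : EuclideanSpace ℂ (Fin n)), (0 : ℝ)) p = p
    refine Prod.ext (zero_add _) ?_
    simp [heisMul]
  mul_one p := by
    show heisMul p ((0 : EuclideanSpace ℂ (Fin n)), (0 : ℝ)) = p
    refine Prod.ext (add_zero _) ?_
    simp [heisMul]
  inv_mul_cancel p := by
    show heisMul (-p.1, -p.2) p = ((0 : EuclideanSpace ℂ (Fin n)), (0 : ℝ))
    have h : (∑ j, (-p.1 : EuclideanSpace ℂ (Fin n)) j * (starRingEnd ℂ) (p.1 j)).im = 0 := by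
      simp only [Complex.im_sum]
      refine Finset.sum_eq_zero fun j _ => ?_
      have hj : (-p.1 : EuclideanSpace ℂ (Fin n)) j = -(p.1 j) := rfl
      rw [hj, neg_mul, Complex.neg_im, Complex.mul_conj]
      simp
    refine Prod.ext (neg_add_cancel _) ?_
    show -p.2 + p.2 +
        (1 / 2) * (∑ j, (-p.1 : EuclideanSpace ℂ (Fin n)) j * (starRingEnd ℂ) (p.1 j)).im = 0
    rw [h]; ring

/-- The sphere `S_r^n = {(z,0) : ‖z‖ = r}` in the Heisenberg group. -/
def heisSphere (n : ℕ) (r : ℝ) : Set (Heis n) := {p : Heis n | ‖p.1‖ = r ∧ p.2 = 0}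

namespace Stmt16Aux

variable {n : ℕ}

lemma mul_def (p q : Heis n) : p * q = heisMul p q := rfl

lemma inv_def (p : Heis n) : p⁻¹ = (-p.1, -p.2) := rfl

lemma sum_single (i : Fin n) (c d : ℂ) :
    (∑ j, (EuclideanSpace.single i c : EuclideanSpace ℂ (Fin n)) j *
      (starRingEnd ℂ) ((EuclideanSpace.single i d : EuclideanSpace ℂ (Fin n)) j)) =
      c * (starRingEnd ℂ) d := by
  rw [Finset.sum_eq_single i]
  · simp [EuclideanSpace.single_apply]
  · intro j _ hj
    simp [EuclideanSpace.single_apply, hj]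
  · simp

lemma single_add (i : Fin n) (c d : ℂ) :
    (EuclideanSpace.single i c : EuclideanSpace ℂ (Fin n)) + EuclideanSpace.single i d =
      EuclideanSpace.single i (c + d) := by
  ext j
  by_cases h : j = i <;> simp [EuclideanSpace.single_apply, h, PiLp.add_apply]

lemma mul_single (i : Fin n) (c d : ℂ) (t s : ℝ) :
    ((EuclideanSpace.single i c, t) : Heis n) * (EuclideanSpace.single i d, s) =
      (EuclideanSpace.single i (c + d), t + s + (1/2) * (c * (starRingEnd ℂ) d).im) := by
  rw [mul_def]
  unfold heisMul
  simp only
  rw [sum_single, single_add]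

lemma single_neg (i : Fin n) (c : ℂ) :
    -(EuclideanSpace.single i c : EuclideanSpace ℂ (Fin n)) = EuclideanSpace.single i (-c) := by
  ext j
  by_cases h : j = i <;> simp [EuclideanSpace.single_apply, h, PiLp.neg_apply]

lemma single_zero (i : Fin n) :
    (EuclideanSpace.single i (0 : ℂ) : EuclideanSpace ℂ (Fin n)) = 0 := by
  ext j
  by_cases h : j = i <;> simp [EuclideanSpace.single_apply, h]

/-- commutator of two single-supported horizontal elements -/
lemma comm_single (i : Fin n) (c d : ℂ) :
    ((EuclideanSpace.single i c, 0) : Heis n) * (EuclideanSpace.single i d, 0) *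
      ((EuclideanSpace.single i c, 0) : Heis n)⁻¹ *
      ((EuclideanSpace.single i d, 0) : Heis n)⁻¹ =
      ((0 : EuclideanSpace ℂ (Fin n)), (c * (starRingEnd ℂ) d).im) := by
  rw [inv_def, inv_def]
  simp only [single_neg, neg_zero]
  rw [mul_single, mul_single, mul_single]
  have h1 : c + d + -c + -d = 0 := by ring
  have h2 : c + d + -c = d := by ring
  rw [show c + d + -c = d from h2]
  refine Prod.ext ?_ ?_
  · show EuclideanSpace.single i (d + -d) = 0
    rw [show d + -d = 0 from by ring, single_zero]
  · show (0:ℝ) + 0 + 1/2 * (c * (starRingEnd ℂ) d).im + 0 +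
      1/2 * ((c + d) * (starRingEnd ℂ) (-c)).im + 0 + 1/2 * (d * (starRingEnd ℂ) (-d)).im
      = (c * (starRingEnd ℂ) d).im
    have e1 : ((c + d) * (starRingEnd ℂ) (-c)).im = (c * (starRingEnd ℂ) d).im := by
      simp only [map_neg, mul_neg, add_mul, Complex.neg_im, Complex.add_im, Complex.mul_conj]
      have : (d * (starRingEnd ℂ) c).im = -(c * (starRingEnd ℂ) d).im := by
        rw [show d * (starRingEnd ℂ) c = (starRingEnd ℂ) (c * (starRingEnd ℂ) d) from by
          rw [map_mul, Complex.conj_conj]; ring]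
        exact Complex.conj_im _
      rw [this]
      simp
    have e2 : (d * (starRingEnd ℂ) (-d)).im = 0 := by
      rw [map_neg, mul_neg, Complex.mul_conj]
      simp
    rw [e1, e2]
    ring

/-- central elements multiply by adding second coordinate -/
lemma central_mul (t s : ℝ) :
    ((0 : EuclideanSpace ℂ (Fin n)), t) * ((0 : EuclideanSpace ℂ (Fin n)), s) =
      ((0 : EuclideanSpace ℂ (Fin n)), t + s) := by
  rw [mul_def]
  unfold heisMul
  refine Prod.ext (add_zero _) ?_
  simp

lemma central_pow (t : ℝ) (k : ℕ) :
    ((0 : EuclideanSpace ℂ (Fin n)), t) ^ k = ((0 : EuclideanSpace ℂ (Fin n)), (k : ℝ) * t) := by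
  induction k with
  | zero => simp; rfl
  | succ k ih =>
    rw [pow_succ, ih, central_mul]
    push_cast
    ring_nf

lemma horiz_pow (w : EuclideanSpace ℂ (Fin n)) (k : ℕ) :
    ((w, 0) : Heis n) ^ k = ((k : ℝ) • w, 0) := by
  induction k with
  | zero =>
    simp only [pow_zero, Nat.cast_zero, zero_smul]
    rfl
  | succ k ih =>
    rw [pow_succ, ih, mul_def]
    unfold heisMul
    refine Prod.ext ?_ ?_
    · show (k : ℝ) • w + w = ((k + 1 : ℕ) : ℝ) • w
      push_cast
      rw [add_smul, one_smul]
    · show (0:ℝ) + 0 + 1/2 * (∑ j, ((k:ℝ) • w : EuclideanSpace ℂ (Fin n)) j *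
        (starRingEnd ℂ) (w j)).im = 0
      have h : (∑ j, ((k:ℝ) • w : EuclideanSpace ℂ (Fin n)) j *
          (starRingEnd ℂ) (w j)).im = 0 := by
        simp only [Complex.im_sum]
        refine Finset.sum_eq_zero fun j _ => ?_
        have hj : ((k:ℝ) • w : EuclideanSpace ℂ (Fin n)) j = ((k:ℝ) : ℂ) * w j := by
          simp [PiLp.smul_apply, Complex.real_smul]
        rw [hj, mul_assoc, Complex.mul_conj]
        simp
      rw [h]; ring

lemma horiz_central_mul (w : EuclideanSpace ℂ (Fin n)) (t s : ℝ) :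
    ((w, t) : Heis n) * ((0 : EuclideanSpace ℂ (Fin n)), s) = (w, t + s) := by
  rw [mul_def]
  unfold heisMul
  refine Prod.ext (add_zero _) ?_
  simp

end Stmt16Aux

theorem stmt16 (n : ℕ) (hn : 1 ≤ n) (r : ℝ) (hr : 0 < r) :
    Subgroup.closure (heisSphere n r) = ⊤ := by
  open Stmt16Aux in
  set H := Subgroup.closure (heisSphere n r) with hH
  have hgen : ∀ u : EuclideanSpace ℂ (Fin n), ‖u‖ = r → ((u, 0) : Heis n) ∈ H :=
    fun u hu => Subgroup.subset_closure ⟨hu, rfl⟩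
  have i : Fin n := ⟨0, hn⟩
  -- small central elements
  have hcen_small : ∀ s : ℝ, |s| ≤ r^2 → ((0 : EuclideanSpace ℂ (Fin n)), s) ∈ H := by
    intro s hs
    set x : ℝ := Real.sqrt (r^2 - s^2/r^2) with hx
    have hnn : 0 ≤ r^2 - s^2/r^2 := by
      rw [sub_nonneg, div_le_iff₀ (by positivity)]
      nlinarith [abs_nonneg s, sq_abs s]
    have hx2 : x^2 = r^2 - s^2/r^2 := Real.sq_sqrt hnn
    set d : ℂ := ⟨x, -(s/r)⟩ with hd
    set c : ℂ := ((r : ℝ) : ℂ) with hc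
    have hdn : ‖(EuclideanSpace.single i d : EuclideanSpace ℂ (Fin n))‖ = r := by
      rw [EuclideanSpace.norm_single, Complex.norm_def, hd,
        Complex.normSq_mk]
      rw [show x * x + -(s/r) * -(s/r) = r^2 from by
        have : x * x = x^2 := (sq x).symm
        rw [this, hx2]; field_simp; ring]
      exact Real.sqrt_sq hr.le
    have hcn : ‖(EuclideanSpace.single i c : EuclideanSpace ℂ (Fin n))‖ = r := by
      rw [EuclideanSpace.norm_single, hc, Complex.norm_real, Real.norm_eq_abs,
        abs_of_pos hr]
    have him : (c * (starRingEnd ℂ) d).im = s := by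
      rw [hc, hd]
      simp [Complex.ext_iff, Complex.mul_im]
      field_simp
    have := Stmt16Aux.comm_single i c d
    rw [him] at this
    rw [← this]
    exact mul_mem (mul_mem (mul_mem (hgen _ hcn) (hgen _ hdn))
      (inv_mem (hgen _ hcn))) (inv_mem (hgen _ hdn))
  -- all central elements
  have hcen : ∀ t : ℝ, ((0 : EuclideanSpace ℂ (Fin n)), t) ∈ H := by
    intro t
    obtain ⟨k, hk⟩ := exists_nat_gt (|t| / r^2)
    have hk0 : 0 < (k : ℝ) := lt_of_le_of_lt (by positivity) hk
    have hsmall : |t / k| ≤ r^2 := by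
      rw [abs_div, abs_of_pos hk0, div_le_iff₀ hk0]
      have := (div_lt_iff₀ (by positivity : (0:ℝ) < r^2)).mp hk
      linarith
    have hmem := hcen_small (t / k) hsmall
    have hpow := Stmt16Aux.central_pow (n := n) (t / k) k
    have : ((0 : EuclideanSpace ℂ (Fin n)), t) =
        ((0 : EuclideanSpace ℂ (Fin n)), t / k) ^ k := by
      rw [hpow]
      congr 1
      field_simp
    rw [this]
    exact pow_mem hmem k
  -- horizontal elements of norm ≤ 2r, with arbitrary t
  have hhoriz : ∀ w : EuclideanSpace ℂ (Fin n), ‖w‖ ≤ 2*r → ∀ t : ℝ, ((w, t) : Heis n) ∈ H := by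
    intro w hw t
    -- decompose w = u + v with ‖u‖ = ‖v‖ = r
    obtain ⟨u, v, hu, hv, huv⟩ :
        ∃ u v : EuclideanSpace ℂ (Fin n), ‖u‖ = r ∧ ‖v‖ = r ∧ u + v = w := by
      by_cases hw0 : w = 0
      · refine ⟨EuclideanSpace.single i ((r:ℝ):ℂ), -EuclideanSpace.single i ((r:ℝ):ℂ), ?_, ?_, ?_⟩
        · rw [EuclideanSpace.norm_single, Complex.norm_real, Real.norm_eq_abs, abs_of_pos hr]
        · rw [norm_neg, EuclideanSpace.norm_single, Complex.norm_real, Real.norm_eq_abs,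
            abs_of_pos hr]
        · rw [hw0, add_neg_cancel]
      · have hm : 0 < ‖w‖ := norm_pos_iff.mpr hw0
        set m := ‖w‖ with hmm
        set cc : ℝ := Real.sqrt (r^2 - m^2/4) with hcc
        have hnn : 0 ≤ r^2 - m^2/4 := by nlinarith
        have hcc2 : cc^2 = r^2 - m^2/4 := Real.sq_sqrt hnn
        set a : ℂ := ⟨1/2, cc/m⟩ with ha
        set b : ℂ := ⟨1/2, -(cc/m)⟩ with hb
        have hab : a + b = 1 := by
          rw [ha, hb, Complex.ext_iff]
          constructor <;> simp
          norm_num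
        have hnorm : ∀ y : ℂ, Complex.normSq y = 1/4 + cc^2/m^2 → ‖y • w‖ = r := by
          intro y hy
          rw [norm_smul, Complex.norm_def, hy, ← hmm]
          have key : (1/4 + cc^2/m^2) * m^2 = r^2 := by
            field_simp
            nlinarith
          calc Real.sqrt (1/4 + cc^2/m^2) * m
              = Real.sqrt (1/4 + cc^2/m^2) * Real.sqrt (m^2) := by rw [Real.sqrt_sq hm.le]
            _ = Real.sqrt ((1/4 + cc^2/m^2) * m^2) := (Real.sqrt_mul (by positivity) _).symm
            _ = Real.sqrt (r^2) := by rw [key]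
            _ = r := Real.sqrt_sq hr.le
        refine ⟨a • w, b • w, hnorm a ?_, hnorm b ?_, ?_⟩
        · rw [ha, Complex.normSq_mk]; field_simp; ring
        · rw [hb, Complex.normSq_mk]; field_simp; ring
        · rw [← add_smul, hab, one_smul]
    -- (u,0)*(v,0) = (w, s)
    have hmul : ((u, 0) : Heis n) * (v, 0) =
        ((w, (0:ℝ) + 0 + 1/2 * (∑ j, u j * (starRingEnd ℂ) (v j)).im) : Heis n) := by
      rw [Stmt16Aux.mul_def]
      unfold heisMul
      rw [huv]
    set s : ℝ := (0:ℝ) + 0 + 1/2 * (∑ j, u j * (starRingEnd ℂ) (v j)).im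
    have h1 : ((w, s) : Heis n) ∈ H := by
      rw [← hmul]; exact mul_mem (hgen u hu) (hgen v hv)
    have h2 := Stmt16Aux.horiz_central_mul w s (t - s)
    rw [show s + (t - s) = t from by ring] at h2
    rw [← h2]
    exact mul_mem h1 (hcen (t - s))
  -- general elements
  rw [Subgroup.eq_top_iff']
  rintro ⟨z, t⟩
  obtain ⟨k, hk⟩ := exists_nat_gt (‖z‖ / (2*r))
  have hk0 : 0 < (k : ℝ) := lt_of_le_of_lt (by positivity) hk
  set w : EuclideanSpace ℂ (Fin n) := ((k : ℝ))⁻¹ • z with hw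
  have hwn : ‖w‖ ≤ 2*r := by
    rw [hw, norm_smul, norm_inv, Real.norm_natCast]
    rw [inv_mul_le_iff₀ hk0]
    have := (div_lt_iff₀ (by positivity : (0:ℝ) < 2*r)).mp hk
    nlinarith
  have hwm : ((w, 0) : Heis n) ∈ H := hhoriz w hwn 0
  have hpow := Stmt16Aux.horiz_pow w k
  have hkw : (k : ℝ) • w = z := by
    rw [hw, smul_smul, mul_inv_cancel₀ (ne_of_gt hk0), one_smul]
  rw [hkw] at hpow
  have hz0 : ((z, 0) : Heis n) ∈ H := by rw [← hpow]; exact pow_mem hwm k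
  have h2 := Stmt16Aux.horiz_central_mul z 0 t
  rw [zero_add] at h2
  rw [← h2]
  exact mul_mem hz0 (hcen t)
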